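/- For every k-colored permutation π of length n, the evacuation of the insertion tableau equals the path tableau produced by Fomin's growth rules along the right edge of the square diagram: ev(P(π)) = P̂(π). -/

import Mathlib

namespace KRF

/-- A letter of the alphabet `{1_1, …, 1_k, 2}`:  `one j` stands for the letter `1_j`
(with `1 ≤ j ≤ k` for genuine letters), and `two` stands for the letter `2`. -/
inductive Letter (k : ℕ) : Type where
  | one : ℕ → Letter k
  | two : Letter k
deriving DecidableEq

/-- A word over the alphabet `{1_1, …, 1_k, 2}`, listed from the leftmost letter to the
rightmost letter. -/
abbrev Word (k : ℕ) := List (Letter k)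

/-- The contribution of a letter to the rank: each `1_j` counts `1` and each `2` counts `2`. -/
def Letter.rank {k : ℕ} : Letter k → ℕ
  | .one _ => 1
  | .two => 2

/-- The rank of a word: the sum of its letters. -/
def Word.rank {k : ℕ} (w : Word k) : ℕ := (w.map Letter.rank).sum

/-- The letter `1_j` is valid when `1 ≤ j ≤ k`. -/
def Letter.Valid (k : ℕ) : Letter k → Prop
  | .one j => 1 ≤ j ∧ j ≤ k
  | .two => True

/-- A genuine word of the Fibonacci poset `Z(k)`: all of its letters are valid. -/
def Word.Valid (k : ℕ) (w : Word k) : Prop := ∀ l ∈ w, l.Valid k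

/-- The cover relation of the Fibonacci poset `Z(k)`:  `z` is covered by `w` iff `z` is
obtained from `w` either by changing a `2` into some `1_j` when all letters to the left of
that `2` are `2`'s, or by deleting the leftmost letter of the form `1_j`. -/
def ZCovers (k : ℕ) (z w : Word k) : Prop :=
  (∃ (p s : Word k) (j : ℕ), (∀ l ∈ p, l = Letter.two) ∧ 1 ≤ j ∧ j ≤ k ∧
      w = p ++ Letter.two :: s ∧ z = p ++ Letter.one j :: s) ∨
  (∃ (p s : Word k) (j : ℕ), (∀ l ∈ p, l = Letter.two) ∧ 1 ≤ j ∧ j ≤ k ∧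
      w = p ++ Letter.one j :: s ∧ z = p ++ s)

/-- `c 0 ⋖ c 1 ⋖ ⋯ ⋖ c n` is a saturated chain in `Z(k)` starting at the empty word. -/
def IsZChain (k n : ℕ) (c : ℕ → Word k) : Prop :=
  c 0 = [] ∧ ∀ i, i < n → ZCovers k (c i) (c (i + 1))

end KRF
namespace KRF

/-- A column of a (tiled and filled) `k`-ribbon Fibonacci tableau.
`single h v` is a column of height 1 (shape letter `1_h`) tiled by one `k`-ribbon of
height `h` filled with the value `v`.
`double ht hb vt vb` is a column of height 2 (shape letter `2`) tiled by a `k`-ribbon of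
height `ht` filled with `vt` stacked on top of a `k`-ribbon of height `hb` (always
`hb = k + 1 - ht` for genuine tableaux) filled with `vb`. -/
inductive Col (k : ℕ) : Type where
  | single : ℕ → ℕ → Col k
  | double : ℕ → ℕ → ℕ → ℕ → Col k
deriving DecidableEq

/-- A (tiled, filled) `k`-ribbon Fibonacci tableau: its list of columns, from the leftmost
column to the rightmost one. -/
abbrev Tab (k : ℕ) := List (Col k)

/-- The shape letter of a column. -/
def Col.shape {k : ℕ} : Col k → Letter k
  | .single h _ => Letter.one h
  | .double _ _ _ _ => Letter.two

/-- The `k`-ribbon Fibonacci shape (a word) underlying a tableau. -/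
def Tab.shape {k : ℕ} (T : Tab k) : Word k := T.map Col.shape

/-- The value in the bottom `k`-ribbon of a column. -/
def Col.bottomVal {k : ℕ} : Col k → ℕ
  | .single _ v => v
  | .double _ _ _ vb => vb

/-- The heights occurring in a column are genuine ribbon heights: between `1` and `k`,
and in a column of height 2 the two heights sum to `k + 1`. -/
def Col.HeightsValid (k : ℕ) : Col k → Prop
  | .single h _ => 1 ≤ h ∧ h ≤ k
  | .double ht hb _ _ => 1 ≤ ht ∧ ht ≤ k ∧ hb = k + 1 - ht

/-- The list of all entries of a tableau (one for each `k`-ribbon). -/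
def Tab.entries {k : ℕ} (T : Tab k) : List ℕ :=
  (T.map fun c => match c with
    | Col.single _ v => [v]
    | Col.double _ _ vt vb => [vt, vb]).flatten

/-- The list of the bottom-ribbon values of the columns of a tableau. -/
def Tab.bottoms {k : ℕ} (T : Tab k) : List ℕ := T.map Col.bottomVal

/-- `T` is a standard `k`-ribbon Fibonacci tableau with entries `1, …, n`:
heights are valid, the entries are exactly `1, …, n`,  and the tableau can be built by
placing `n, n-1, …, 1` in order, each new `k`-ribbon being either appended (as a new
rightmost height-1 column) to the shape formed by the `k`-ribbons containing larger
entries, or stacked on top of a single such `k`-ribbon.  Equivalently (and this is how we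
formalize it): the bottom entries strictly decrease from left to right (in particular the
`k`-ribbon containing the leftmost square of the bottom row contains `n`), and in each
column of height 2 the top entry is smaller than the bottom entry. -/
def IsStandardTab (k n : ℕ) (T : Tab k) : Prop :=
  (∀ c ∈ T, Col.HeightsValid k c) ∧
  (Tab.entries T).Perm (List.range' 1 n) ∧
  List.Chain' (fun a b => b < a) (Tab.bottoms T) ∧
  (∀ c ∈ T, ∀ ht hb vt vb, c = Col.double ht hb vt vb → vt < vb)

/-- Updating a (partial) path tableau along one cover step `z ⋖ w` of `Z(k)`, placing the
value `i` in the `k` new squares of `w` relative to `z`:  if `w` is obtained from `z` by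
inserting a letter `1_j` after the prefix of `2`'s, a new height-1 column with a single
ribbon of height `j` filled with `i` is created there; if `w` is obtained from `z` by
changing the letter `1_h` just after the prefix of `2`'s into a `2`, the `k` new squares
of that column form a `k`-ribbon of height `k + 1 - h` filled with `i`, stacked on top of
the already present `k`-ribbon of height `h`. -/
def updateTab (k : ℕ) (i : ℕ) : Word k → Word k → Tab k → Tab k
  | Letter.two :: z', Letter.two :: w', c :: T => c :: updateTab k i z' w' T
  | Letter.one h :: _, Letter.two :: _, Col.single _ v :: T =>
      Col.double (k + 1 - h) h i v :: T
  | z, Letter.one j :: w', T => if z = w' then Col.single j i :: T else T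
  | _, _, T => T

/-- The `k`-ribbon Fibonacci path tableau determined by a saturated chain in `Z(k)`:
for each `i = 1, …, n` the value `i` is placed in the `k` new squares of `c i` relative
to `c (i-1)`. -/
def chainTab (k : ℕ) (c : ℕ → Word k) : ℕ → Tab k
  | 0 => []
  | m + 1 => updateTab k (m + 1) (c m) (c (m + 1)) (chainTab k c m)

/-- `T` is a `k`-ribbon Fibonacci path tableau with entries `1, …, n`: it is obtained
from some saturated chain `∅ = c 0 ⋖ c 1 ⋖ ⋯ ⋖ c n` in `Z(k)` by placing `i`'s in the
`k` new squares created at the `i`-th step. -/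
def IsPathTab (k n : ℕ) (T : Tab k) : Prop :=
  ∃ c : ℕ → Word k, IsZChain k n c ∧ T = chainTab k c n

end KRF
namespace KRF

/-- A `k`-colored permutation of length `n`: a permutation `x_1 x_2 ⋯ x_n` of `{1, …, n}`
(here `x_i = perm i + 1`, using `Fin n` positions and values) together with a color
`color i ∈ {1, …, k}` attached to each entry. -/
structure ColoredPerm (n k : ℕ) : Type where
  perm : Equiv.Perm (Fin n)
  color : Fin n → ℕ
  color_pos : ∀ i, 1 ≤ color i
  color_le : ∀ i, color i ≤ k

/-- Insertion of a value `x` of color `j` into a `k`-ribbon Fibonacci tableau: compare `x`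
with the value `t` in the `k`-ribbon containing the leftmost square of the bottom row.
If the tableau is empty or `x > t`, a new leftmost height-1 column consisting of a single
`k`-ribbon of height `j` filled with `x` is created.  If `x < t`, a `k`-ribbon of height
`j` filled with `x` is placed on top of the `k`-ribbon containing `t` (which is forced to
become a `k`-ribbon of height `k + 1 - j`); if a `k`-ribbon of height `l` filled with `b`
was already on top of the ribbon containing `t`, it is bumped out and the value `b` with
color `l` is inserted recursively into the tableau formed by the columns to the right. -/
def insertVal (k : ℕ) (x j : ℕ) : Tab k → Tab k
  | [] => [Col.single j x]
  | c :: rest =>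
    if Col.bottomVal c < x then Col.single j x :: c :: rest
    else
      match c with
      | Col.single _ v => Col.double j (k + 1 - j) x v :: rest
      | Col.double ht _ vt vb => Col.double j (k + 1 - j) x vb :: insertVal k vt ht rest

/-- The insertion tableau obtained after inserting the first `i` colored entries
`x_1^{j_1}, …, x_i^{j_i}` of the `k`-colored permutation `π` into the empty tableau. -/
def PPartial (k n : ℕ) (π : ColoredPerm n k) (i : ℕ) : Tab k :=
  ((List.finRange n).take i).foldl
    (fun T m => insertVal k ((π.perm m : ℕ) + 1) (π.color m) T) []

/-- The insertion tableau `P(π)` of a `k`-colored permutation. -/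
def PTab (k n : ℕ) (π : ColoredPerm n k) : Tab k := PPartial k n π n

/-- The chain of shapes of the partial insertion tableaux of `π`. -/
def QChain (k n : ℕ) (π : ColoredPerm n k) (i : ℕ) : Word k :=
  Tab.shape (PPartial k n π i)

/-- The recording tableau `Q(π)`: it has the same shape as `P(π)`, and after the `i`-th
insertion the value `i` is placed in the `k` squares by which the shape grew at step `i`. -/
def QTab (k n : ℕ) (π : ColoredPerm n k) : Tab k := chainTab k (QChain k n π) n

end KRF
namespace KRF

/-- Fomin's local growth rule: given the labels `ν` (bottom-left), `μ₁` (top-left),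
`μ₂` (bottom-right) of a unit square and the `X` of the square (`some j` if the square
contains an `X^j`, `none` otherwise), it computes the top-right label `λ`:
(1) if exactly one of `μ₁, μ₂` covers `ν` and the other equals `ν`, then `λ` is the
covering one; (2) if both cover `ν` then `λ = 2ν`; (3) if `μ₁ = ν = μ₂` and the square
contains an `X^j` then `λ = 1_j ν`; (4) if `μ₁ = ν = μ₂` and there is no `X`, `λ = ν`. -/
def growthRule (k : ℕ) (ν μ₁ μ₂ : Word k) (x : Option ℕ) : Word k :=
  if μ₁ = ν ∧ μ₂ = ν then
    match x with
    | some j => Letter.one j :: ν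
    | none => ν
  else if μ₁ = ν then μ₂
  else if μ₂ = ν then μ₁
  else Letter.two :: ν

/-- The content of the unit square in column `c+1` and row `r+1` (1-indexed) of the square
diagram of `π`: `some j` if it contains an `X^j` (i.e. `π` sends position `c+1` to value
`r+1`, colored `j`), and `none` otherwise. -/
def squareX (k n : ℕ) (π : ColoredPerm n k) (c r : ℕ) : Option ℕ :=
  if h : c < n ∧ r < n then
    if (π.perm ⟨c, h.1⟩ : ℕ) = r then some (π.color ⟨c, h.1⟩) else none
  else none

/-- The labels of the corners of the square diagram of `π` produced by Fomin's growth
rules: every corner on the left and bottom edges is labeled by the empty word, and the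
top-right corner of each unit square is computed by the local growth rule. -/
def growth (k n : ℕ) (π : ColoredPerm n k) : ℕ → ℕ → Word k
  | 0, _ => []
  | _ + 1, 0 => []
  | c + 1, r + 1 =>
      growthRule k (growth k n π c r) (growth k n π c (r + 1)) (growth k n π (c + 1) r)
        (squareX k n π c r)
termination_by c r => (c, r)

/-- The saturated chain read bottom-to-top up the right edge of the growth diagram. -/
def PhatChain (k n : ℕ) (π : ColoredPerm n k) (r : ℕ) : Word k := growth k n π n r

/-- The saturated chain read left-to-right along the top edge of the growth diagram. -/
def QhatChain (k n : ℕ) (π : ColoredPerm n k) (c : ℕ) : Word k := growth k n π c n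

/-- The `k`-ribbon Fibonacci path tableau `P̂(π)` obtained from the right edge of the
growth diagram of `π`. -/
def PhatTab (k n : ℕ) (π : ColoredPerm n k) : Tab k := chainTab k (PhatChain k n π) n

/-- The `k`-ribbon Fibonacci path tableau `Q̂(π)` obtained from the top edge of the
growth diagram of `π`. -/
def QhatTab (k n : ℕ) (π : ColoredPerm n k) : Tab k := chainTab k (QhatChain k n π) n

end KRF
namespace KRF

/-- The bubbling phase of one evacuation step.  The current column has an empty bottom
`k`-ribbon, below a `k`-ribbon of height `ht` filled with `a` (`hb` is the height of the
empty ribbon); `rest` is the list of columns strictly to its right.  As long as there is a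
ribbon above the empty one, `a` is compared with the entry `b` of the bottom ribbon of the
next column: if `a > b` the ribbon containing `a` drops to the bottom (keeping its height)
and the empty ribbon moves to the top of the column, where it is removed; if `a < b` the
empty ribbon is filled with `b` and the empty ribbon moves to the next column.  The result
is the position (index relative to the current column, height, whether it was a top
ribbon) of the finally removed empty `k`-ribbon, together with the updated suffix of the
tableau (with the empty ribbon removed and the columns slid left). -/
def evacLoop {k : ℕ} (ht hb a : ℕ) : Tab k → (ℕ × ℕ × Bool) × Tab k
  | [] => ((0, hb, true), [Col.single ht a])
  | c :: rest =>
    if Col.bottomVal c < a then ((0, hb, true), Col.single ht a :: c :: rest)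
    else
      match c with
      | Col.single h2 v => ((1, h2, false), Col.double ht hb a v :: rest)
      | Col.double ht' hb' vt' vb' =>
          let r := evacLoop ht' hb' vt' rest
          ((r.1.1 + 1, r.1.2.1, r.1.2.2), Col.double ht hb a vb' :: r.2)

/-- One evacuation step: erase the entry of the bottom `k`-ribbon of the leftmost column
(the largest entry) and bubble the empty ribbon until it can be removed.  Returns the
position (column index, height, whether it is a top ribbon) of the removed empty
`k`-ribbon together with the remaining (slid) tableau. -/
def evacStep (k : ℕ) : Tab k → (ℕ × ℕ × Bool) × Tab k
  | [] => ((0, 0, false), [])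
  | Col.single h _ :: rest => ((0, h, false), rest)
  | Col.double ht hb vt _ :: rest => evacLoop ht hb vt rest

/-- Place the value `v` in a `k`-ribbon of height `h` at the column with index `idx`:
if `isTop = false` a new height-1 column is inserted at index `idx`; if `isTop = true`
the ribbon is put on top of the (single) ribbon of the column at index `idx`. -/
def placeAt {k : ℕ} : ℕ → ℕ → Bool → ℕ → Tab k → Tab k
  | 0, h, false, v, T => Col.single h v :: T
  | 0, h, true, v, Col.single h0 vb :: rest => Col.double h h0 v vb :: rest
  | 0, _, true, _, T => T
  | idx + 1, h, tp, v, c :: rest => c :: placeAt idx h tp v rest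
  | _ + 1, _, _, _, [] => []

/-- The number of `k`-ribbons of a tableau. -/
def Tab.ribbonCount {k : ℕ} (T : Tab k) : ℕ :=
  (T.map fun c => match c with
    | Col.single _ _ => 1
    | Col.double _ _ _ _ => 2).sum

/-- The evacuation recursion: each step removes the largest remaining entry, bubbles the
empty ribbon to its final position, and records that entry at that position in the
evacuation tableau (which has the same shape as the original tableau).  Each step removes
exactly one `k`-ribbon, so `Tab.ribbonCount T` steps suffice. -/
def evacAux (k : ℕ) : ℕ → Tab k → Tab k
  | 0, _ => []
  | _ + 1, [] => []
  | fuel + 1, c :: rest =>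
      let s := evacStep k (c :: rest)
      placeAt s.1.1 s.1.2.1 s.1.2.2 (Col.bottomVal c) (evacAux k fuel s.2)

/-- The evacuation `ev(P)` of a (standard) `k`-ribbon Fibonacci tableau. -/
def evac (k : ℕ) (T : Tab k) : Tab k := evacAux k (Tab.ribbonCount T) T

end KRF
namespace KRF
variable {k : ℕ}

lemma updateTab_one (i j : ℕ) (z : Word k) (T : Tab k) :
    updateTab k i z (Letter.one j :: z) T = Col.single j i :: T := by
  cases z with
  | nil => cases T <;> simp [updateTab]
  | cons l z' => cases l <;> cases T <;> simp [updateTab]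

lemma updateTab_two (i : ℕ) (z' w' : Word k) (c : Col k) (T : Tab k) :
    updateTab k i (Letter.two :: z') (Letter.two :: w') (c :: T) =
      c :: updateTab k i z' w' T := rfl

lemma updateTab_mix (i h h0 v : ℕ) (z' w' : Word k) (T : Tab k) :
    updateTab k i (Letter.one h :: z') (Letter.two :: w') (Col.single h0 v :: T) =
      Col.double (k + 1 - h) h i v :: T := rfl

end KRF
namespace KRF
variable {k : ℕ}

/-- Insertion of a list of (value, color) pairs into the empty tableau. -/
def insL (k : ℕ) (L : List (ℕ × ℕ)) : Tab k :=
  L.foldl (fun T p => insertVal k p.1 p.2 T) []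

lemma insL_append (L M : List (ℕ × ℕ)) :
    insL k (L ++ M) = M.foldl (fun T p => insertVal k p.1 p.2 T) (insL k L) := by
  simp [insL, List.foldl_append]

lemma insL_concat (L : List (ℕ × ℕ)) (p : ℕ × ℕ) :
    insL k (L ++ [p]) = insertVal k p.1 p.2 (insL k L) := by
  simp [insL_append]

lemma entries_insertVal (x j : ℕ) (T : Tab k) :
    (insertVal k x j T).entries.Perm (x :: T.entries) := by
  induction T generalizing x j with
  | nil => simp [insertVal, Tab.entries]
  | cons c rest ih =>
    by_cases h : Col.bottomVal c < x
    · simp [insertVal, h, Tab.entries]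
    · cases c with
      | single h1 v => simp [insertVal, h, Tab.entries]
      | double ht hb vt vb =>
        simp only [insertVal, h, if_false, Tab.entries, List.map_cons, List.flatten_cons]
        have : ([x, vb] ++ (Tab.entries (insertVal k vt ht rest))).Perm
            (x :: vb :: vt :: Tab.entries rest) :=
          List.Perm.cons x (List.Perm.cons vb (ih vt ht))
        refine (this.trans ?_)
        exact List.Perm.cons x (List.Perm.swap vt vb _)

lemma entries_insL (L : List (ℕ × ℕ)) :
    (insL k L).entries.Perm (L.map Prod.fst) := by
  have H : ∀ (L : List (ℕ × ℕ)) (T : Tab k),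
      (L.foldl (fun T p => insertVal k p.1 p.2 T) T).entries.Perm
        (L.map Prod.fst ++ T.entries) := by
    intro L
    induction L with
    | nil => intro T; simp
    | cons p L ih =>
      intro T
      simp only [List.foldl_cons, List.map_cons, List.cons_append]
      refine (ih _).trans ?_
      refine (List.Perm.append_left _ (entries_insertVal _ _ _)).trans ?_
      exact List.perm_middle
  simpa [Tab.entries, insL] using H L []

lemma bottomVal_head_mem_entries (c : Col k) (T : Tab k) :
    Col.bottomVal c ∈ Tab.entries (c :: T) := by
  cases c <;> simp [Tab.entries, Col.bottomVal]

lemma insertVal_of_big (x j : ℕ) (T : Tab k) (h : ∀ v ∈ Tab.entries T, v < x) :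
    insertVal k x j T = Col.single j x :: T := by
  cases T with
  | nil => rfl
  | cons c rest =>
    have := h _ (bottomVal_head_mem_entries c rest)
    simp [insertVal, this]

lemma ribbonCount_insertVal (x j : ℕ) (T : Tab k) :
    Tab.ribbonCount (insertVal k x j T) = Tab.ribbonCount T + 1 := by
  induction T generalizing x j with
  | nil => simp [insertVal, Tab.ribbonCount]
  | cons c rest ih =>
    by_cases h : Col.bottomVal c < x
    · simp [insertVal, h, Tab.ribbonCount]; omega
    · cases c with
      | single h1 v => simp [insertVal, h, Tab.ribbonCount]; omega
      | double ht hb vt vb =>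
        simp only [insertVal, h, if_false, Tab.ribbonCount, List.map_cons, List.sum_cons]
        have := ih vt ht
        simp [Tab.ribbonCount] at this
        omega

lemma ribbonCount_insL (L : List (ℕ × ℕ)) :
    Tab.ribbonCount (insL k L) = L.length := by
  have H : ∀ (L : List (ℕ × ℕ)) (T : Tab k),
      Tab.ribbonCount (L.foldl (fun T p => insertVal k p.1 p.2 T) T) =
        Tab.ribbonCount T + L.length := by
    intro L
    induction L with
    | nil => intro T; simp
    | cons p L ih =>
      intro T
      simp only [List.foldl_cons, List.length_cons]
      rw [ih, ribbonCount_insertVal]; omega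
  simpa [Tab.ribbonCount, insL] using H L []

lemma rank_shape (T : Tab k) : Word.rank (Tab.shape T) = Tab.ribbonCount T := by
  induction T with
  | nil => rfl
  | cons c rest ih =>
    cases c <;> simp [Tab.shape, Word.rank, Tab.ribbonCount, Col.shape, Letter.rank] at * <;>
      omega

/-- Invariant: every double column has bottom height `k + 1 -` top height. -/
def InvT (k : ℕ) (T : Tab k) : Prop :=
  ∀ c ∈ T, ∀ ht hb vt vb, c = Col.double ht hb vt vb → hb = k + 1 - ht

lemma invT_insertVal (x j : ℕ) (T : Tab k) (h : InvT k T) : InvT k (insertVal k x j T) := by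
  induction T generalizing x j with
  | nil =>
    intro c hc ht hb vt vb hcc
    simp [insertVal] at hc
    simp [hc] at hcc
  | cons c rest ih =>
    by_cases hlt : Col.bottomVal c < x
    · intro c' hc' ht hb vt vb hcc
      simp [insertVal, hlt] at hc'
      rcases hc' with h1 | h2 | h3
      · simp [h1] at hcc
      · exact h c' (by simp [h2]) _ _ _ _ hcc
      · exact h c' (by simp [h3]) _ _ _ _ hcc
    · cases c with
      | single h1 v =>
        intro c' hc' ht hb vt vb hcc
        simp [insertVal, hlt] at hc'
        rcases hc' with h1' | h2'
        · simp [h1'] at hcc; omega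
        · exact h c' (by simp [h2']) _ _ _ _ hcc
      | double ht' hb' vt' vb' =>
        intro c' hc' ht hb vt vb hcc
        simp only [insertVal, hlt, if_false] at hc'
        rcases List.mem_cons.mp hc' with h1' | h2'
        · simp [h1'] at hcc; omega
        · exact ih vt' ht' (fun d hd => h d (List.mem_cons_of_mem _ hd)) c' h2' _ _ _ _ hcc

lemma invT_insL (L : List (ℕ × ℕ)) : InvT k (insL k L) := by
  have H : ∀ (L : List (ℕ × ℕ)) (T : Tab k), InvT k T →
      InvT k (L.foldl (fun T p => insertVal k p.1 p.2 T) T) := by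
    intro L
    induction L with
    | nil => intro T h; simpa
    | cons p L ih => intro T h; exact ih _ (invT_insertVal _ _ _ h)
  exact H L [] (by intro c hc; simp at hc)

end KRF
namespace KRF
variable {k : ℕ}

lemma entries_lt (L : List (ℕ × ℕ)) (m : ℕ) (h : ∀ v ∈ L.map Prod.fst, v < m) :
    ∀ v ∈ Tab.entries (insL k L), v < m := by
  intro v hv
  exact h v ((entries_insL L).mem_iff.mp hv)

/-- Lemma B, base case: the max inserted last creates a new leftmost column. -/
lemma insL_max_last (A : List (ℕ × ℕ)) (m j : ℕ)
    (h : ∀ v ∈ A.map Prod.fst, v < m) :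
    insL k (A ++ [(m, j)]) = Col.single j m :: insL k A := by
  rw [insL_concat]
  exact insertVal_of_big m j _ (entries_lt A m h)

/-- Lemma B, general case: max followed by a nonempty suffix. -/
lemma insL_max_mid (S : List (ℕ × ℕ)) (p : ℕ × ℕ) (A : List (ℕ × ℕ)) (m j : ℕ)
    (h : ∀ v ∈ (A ++ (S ++ [p])).map Prod.fst, v < m) :
    insL k (A ++ (m, j) :: (S ++ [p])) =
      Col.double p.2 (k + 1 - p.2) p.1 m :: insL k (A ++ S) := by
  induction S using List.reverseRecOn generalizing p with
  | nil =>
    have hA : ∀ v ∈ A.map Prod.fst, v < m := fun v hv => h v (by simp at hv ⊢; tauto)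
    have hp : p.1 < m := h p.1 (by simp)
    have e : A ++ (m, j) :: ([] ++ [p]) = (A ++ [(m, j)]) ++ [p] := by simp
    rw [e, insL_concat, insL_max_last A m j hA]
    simp [insertVal, Col.bottomVal, Nat.not_lt.mpr (le_of_lt hp), Nat.lt_irrefl,
      if_neg (by omega : ¬ (m < p.1))]
  | append_singleton S q ih =>
    have hq : q.1 < m := h q.1 (by simp)
    have hp : p.1 < m := h p.1 (by simp)
    have h' : ∀ v ∈ (A ++ (S ++ [q])).map Prod.fst, v < m := by
      intro v hv; apply h; simp at hv ⊢; tauto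
    have e : A ++ (m, j) :: ((S ++ [q]) ++ [p]) = (A ++ (m, j) :: (S ++ [q])) ++ [p] := by simp
    rw [e, insL_concat, ih q h']
    simp only [insertVal, Col.bottomVal, if_neg (by omega : ¬ (m < p.1))]
    rw [← insL_concat]
    simp [le_of_lt hp]

end KRF
namespace KRF
variable {k : ℕ}

lemma shape_cons_one {T : Tab k} {h : ℕ} {s : Word k}
    (hT : Tab.shape T = Letter.one h :: s) :
    ∃ v T0, T = Col.single h v :: T0 ∧ Tab.shape T0 = s := by
  cases T with
  | nil => simp [Tab.shape] at hT
  | cons c T0 =>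
    cases c with
    | single h0 v =>
      simp [Tab.shape, Col.shape] at hT
      exact ⟨v, T0, by simp [hT.1], hT.2⟩
    | double a b c' d => simp [Tab.shape, Col.shape] at hT

lemma shape_cons_two {T : Tab k} {s : Word k}
    (hT : Tab.shape T = Letter.two :: s) :
    ∃ a b c d T0, T = Col.double a b c d :: T0 ∧ Tab.shape T0 = s := by
  cases T with
  | nil => simp [Tab.shape] at hT
  | cons c T0 =>
    cases c with
    | single h0 v => simp [Tab.shape, Col.shape] at hT
    | double a b c' d =>
      simp [Tab.shape, Col.shape] at hT
      exact ⟨a, b, c', d, T0, rfl, hT⟩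

lemma evacLoop_spec (ht a : ℕ) (R : Tab k) (hInv : InvT k R) :
    (evacLoop ht (k + 1 - ht) a R).2 = insertVal k a ht R ∧
    ∀ v (T : Tab k), Tab.shape T = Tab.shape (insertVal k a ht R) →
      updateTab k v (Tab.shape (insertVal k a ht R)) (Letter.two :: Tab.shape R) T =
        placeAt (evacLoop ht (k + 1 - ht) a R).1.1 (evacLoop ht (k + 1 - ht) a R).1.2.1
          (evacLoop ht (k + 1 - ht) a R).1.2.2 v T ∧
      Tab.shape (placeAt (evacLoop ht (k + 1 - ht) a R).1.1
          (evacLoop ht (k + 1 - ht) a R).1.2.1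
          (evacLoop ht (k + 1 - ht) a R).1.2.2 v T) = Letter.two :: Tab.shape R := by
  induction R generalizing ht a with
  | nil =>
    refine ⟨rfl, ?_⟩
    intro v T hT
    simp only [insertVal, Tab.shape, Col.shape, List.map_cons, List.map_nil] at hT
    obtain ⟨vb, T0, rfl, hT0⟩ := shape_cons_one hT
    have hT0' : T0 = [] := by cases T0 <;> simp [Tab.shape] at hT0 ⊢
    subst hT0'
    exact ⟨rfl, by simp [evacLoop, placeAt, Tab.shape, Col.shape]⟩
  | cons c rest ih =>
    by_cases hlt : Col.bottomVal c < a
    · refine ⟨by simp [evacLoop, insertVal, hlt], ?_⟩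
      intro v T hT
      have hins : insertVal k a ht (c :: rest) = Col.single ht a :: c :: rest := by
        simp [insertVal, hlt]
      rw [hins] at hT ⊢
      simp only [Tab.shape, Col.shape, List.map_cons] at hT
      obtain ⟨vb, T0, rfl, hT0⟩ := shape_cons_one hT
      have hloop : evacLoop ht (k + 1 - ht) a (c :: rest) =
          ((0, k + 1 - ht, true), Col.single ht a :: c :: rest) := by
        simp [evacLoop, hlt]
      rw [hloop]
      refine ⟨?_, ?_⟩
      · show updateTab k v (Letter.one ht :: Tab.shape (c :: rest))
            (Letter.two :: Tab.shape (c :: rest)) (Col.single ht vb :: T0) = _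
        rw [updateTab_mix]
        rfl
      · simp only [placeAt, Tab.shape, Col.shape, List.map_cons]
        rw [show List.map Col.shape T0 = _ from hT0]
    · cases c with
      | single h2 v2 =>
        refine ⟨by simp [evacLoop, insertVal, hlt], ?_⟩
        intro v T hT
        have hins : insertVal k a ht (Col.single h2 v2 :: rest) =
            Col.double ht (k + 1 - ht) a v2 :: rest := by
          simp [insertVal, hlt]
        rw [hins] at hT ⊢
        simp only [Tab.shape, Col.shape, List.map_cons] at hT
        obtain ⟨q1, q2, q3, q4, T0, rfl, hT0⟩ := shape_cons_two hT
        have hloop : evacLoop ht (k + 1 - ht) a (Col.single h2 v2 :: rest) =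
            ((1, h2, false), Col.double ht (k + 1 - ht) a v2 :: rest) := by
          simp [evacLoop, hlt]
        rw [hloop]
        refine ⟨?_, ?_⟩
        · show updateTab k v (Letter.two :: Tab.shape rest)
            (Letter.two :: Tab.shape (Col.single h2 v2 :: rest)) _ = _
          show updateTab k v (Letter.two :: Tab.shape rest)
            (Letter.two :: Letter.one h2 :: Tab.shape rest) _ = _
          rw [updateTab_two, updateTab_one]
          rfl
        · simp only [placeAt, Tab.shape, Col.shape, List.map_cons]
          rw [show List.map Col.shape T0 = _ from hT0]
      | double ht' hb' vt' vb' =>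
        have hb'eq : hb' = k + 1 - ht' :=
          hInv _ (List.mem_cons_self) ht' hb' vt' vb' rfl
        subst hb'eq
        have hInv' : InvT k rest := fun d hd => hInv d (List.mem_cons_of_mem _ hd)
        obtain ⟨ih1, ih2⟩ := ih ht' vt' hInv'
        have hloop : evacLoop ht (k + 1 - ht) a (Col.double ht' (k + 1 - ht') vt' vb' :: rest) =
            (((evacLoop ht' (k + 1 - ht') vt' rest).1.1 + 1,
              (evacLoop ht' (k + 1 - ht') vt' rest).1.2.1,
              (evacLoop ht' (k + 1 - ht') vt' rest).1.2.2),
             Col.double ht (k + 1 - ht) a vb' :: (evacLoop ht' (k + 1 - ht') vt' rest).2) := by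
          simp [evacLoop, hlt]
        have hins : insertVal k a ht (Col.double ht' (k + 1 - ht') vt' vb' :: rest) =
            Col.double ht (k + 1 - ht) a vb' :: insertVal k vt' ht' rest := by
          simp [insertVal, hlt]
        refine ⟨by rw [hloop, hins, ih1], ?_⟩
        intro v T hT
        rw [hins] at hT ⊢
        simp only [Tab.shape, Col.shape, List.map_cons] at hT
        obtain ⟨q1, q2, q3, q4, T0, rfl, hT0⟩ := shape_cons_two hT
        rw [hloop]
        obtain ⟨ihu, ihs⟩ := ih2 v T0 hT0
        refine ⟨?_, ?_⟩
        · show updateTab k v (Letter.two :: Tab.shape (insertVal k vt' ht' rest))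
            (Letter.two :: Letter.two :: Tab.shape rest) _ = _
          rw [updateTab_two]
          show _ = Col.double q1 q2 q3 q4 :: placeAt _ _ _ v T0
          rw [← ihu]
        · show Tab.shape (Col.double q1 q2 q3 q4 :: placeAt _ _ _ v T0) = _
          simp only [Tab.shape, Col.shape, List.map_cons]
          rw [show (placeAt (evacLoop ht' (k+1-ht') vt' rest).1.1
              (evacLoop ht' (k+1-ht') vt' rest).1.2.1
              (evacLoop ht' (k+1-ht') vt' rest).1.2.2 v T0).map Col.shape =
              Letter.two :: Tab.shape rest from ihs]
          rfl

end KRF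
namespace KRF
variable {k : ℕ}

lemma chainTab_congr (c c' : ℕ → Word k) (m : ℕ) (h : ∀ i ≤ m, c i = c' i) :
    chainTab k c m = chainTab k c' m := by
  induction m with
  | zero => rfl
  | succ m ih =>
    simp only [chainTab]
    rw [ih (fun i hi => h i (le_trans hi (Nat.le_succ m))), h m (Nat.le_succ m),
      h (m + 1) le_rfl]

lemma perm_drop_max (A S : List (ℕ × ℕ)) (j m : ℕ)
    (h : ((A ++ ((m+1), j) :: S).map Prod.fst).Perm (List.range' 1 (m+1))) :
    ((A ++ S).map Prod.fst).Perm (List.range' 1 m) := by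
  have h1 : (((m+1) : ℕ) :: (A ++ S).map Prod.fst).Perm
      ((A ++ ((m+1), j) :: S).map Prod.fst) := by
    simp only [List.map_append, List.map_cons]
    exact (List.perm_middle).symm
  have h2 : ((m + 1) :: (A ++ S).map Prod.fst).Perm ((m + 1) :: List.range' 1 m) := by
    refine (h1.trans h).trans ?_
    rw [List.range'_concat, show 1 + 1 * m = m + 1 by omega]
    exact List.perm_append_singleton _ _
  exact h2.cons_inv

lemma filter_eq_self_of_le (M : List (ℕ × ℕ)) (r : ℕ)
    (h : ∀ v ∈ M.map Prod.fst, v ≤ r) :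
    M.filter (fun p => p.1 ≤ r) = M := by
  refine List.filter_eq_self.mpr ?_
  intro p hp
  have := h p.1 (List.mem_map.mpr ⟨p, hp, rfl⟩)
  simpa using this

lemma filter_mid (A S : List (ℕ × ℕ)) (x j r : ℕ) (hx : ¬ x ≤ r) :
    (A ++ (x, j) :: S).filter (fun p => p.1 ≤ r) =
      (A ++ S).filter (fun p => p.1 ≤ r) := by
  simp only [List.filter_append, List.filter_cons]
  simp only [hx, decide_eq_true_eq]
  simp

lemma evacAux_insL (n : ℕ) (L : List (ℕ × ℕ))
    (hL : (L.map Prod.fst).Perm (List.range' 1 n)) :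
    evacAux k n (insL k L) =
      chainTab k (fun r => Tab.shape (insL k (L.filter (fun p => p.1 ≤ r)))) n ∧
    Tab.shape (chainTab k (fun r => Tab.shape (insL k (L.filter (fun p => p.1 ≤ r)))) n) =
      Tab.shape (insL k L) := by
  induction n generalizing L with
  | zero =>
    have : L = [] := by
      have := hL.length_eq
      simpa using List.eq_nil_of_length_eq_zero (by simpa using this)
    subst this
    exact ⟨rfl, rfl⟩
  | succ m ih =>
    have hmem : (m + 1) ∈ L.map Prod.fst := hL.mem_iff.mpr (by
      rw [List.mem_range'_1]; omega)
    obtain ⟨p, hpL, hp1⟩ := List.mem_map.mp hmem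
    obtain ⟨A, S0, rfl⟩ := List.append_of_mem hpL
    obtain ⟨x, j⟩ := p
    have hx : x = m + 1 := hp1
    subst hx
    have htop : (A ++ ((m+1), j) :: S0).filter (fun p => p.1 ≤ m + 1) =
        A ++ ((m+1), j) :: S0 := by
      refine filter_eq_self_of_le _ _ ?_
      intro v hv
      have := hL.mem_iff.mp hv
      rw [List.mem_range'_1] at this
      omega
    have hAS : ((A ++ S0).map Prod.fst).Perm (List.range' 1 m) := perm_drop_max A S0 j m hL
    have hlt : ∀ v ∈ (A ++ S0).map Prod.fst, v < m + 1 := by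
      intro v hv
      have := hAS.mem_iff.mp hv
      rw [List.mem_range'_1] at this
      omega
    have hfall : (A ++ S0).filter (fun p => p.1 ≤ m) = A ++ S0 :=
      filter_eq_self_of_le _ _ (fun v hv => by have := hlt v hv; omega)
    have hfeq : ∀ i, i ≤ m → (A ++ ((m+1), j) :: S0).filter (fun p => p.1 ≤ i) =
        (A ++ S0).filter (fun p => p.1 ≤ i) :=
      fun i hi => filter_mid A S0 (m+1) j i (by omega)
    have hcongr : chainTab k
          (fun r => Tab.shape (insL k ((A ++ ((m+1), j) :: S0).filter (fun p => p.1 ≤ r)))) m =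
        chainTab k (fun r => Tab.shape (insL k ((A ++ S0).filter (fun p => p.1 ≤ r)))) m := by
      refine chainTab_congr _ _ m ?_
      intro i hi
      rw [hfeq i hi]
    obtain ⟨ih1, ih2⟩ := ih (A ++ S0) hAS
    have hch : chainTab k
          (fun r => Tab.shape (insL k ((A ++ ((m+1), j) :: S0).filter (fun p => p.1 ≤ r))))
          (m + 1) =
        updateTab k (m + 1)
          (Tab.shape (insL k ((A ++ S0).filter (fun p => p.1 ≤ m))))
          (Tab.shape (insL k (A ++ ((m+1), j) :: S0)))
          (chainTab k (fun r => Tab.shape (insL k ((A ++ S0).filter (fun p => p.1 ≤ r)))) m) := by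
      show updateTab k (m + 1)
          (Tab.shape (insL k ((A ++ ((m+1), j) :: S0).filter (fun p => p.1 ≤ m))))
          (Tab.shape (insL k ((A ++ ((m+1), j) :: S0).filter (fun p => p.1 ≤ m + 1))))
          (chainTab k
            (fun r => Tab.shape (insL k ((A ++ ((m+1), j) :: S0).filter (fun p => p.1 ≤ r)))) m)
          = _
      rw [hfeq m le_rfl, htop, hcongr]
    rw [hfall] at hch
    rcases S0.eq_nil_or_concat with rfl | ⟨S', q, hS⟩
    · -- S0 = []
      have hA : ∀ v ∈ A.map Prod.fst, v < m + 1 := by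
        intro v hv
        exact hlt v (by simpa using hv)
      have hins : insL k (A ++ [((m+1), j)]) = Col.single j (m+1) :: insL k A :=
        insL_max_last A (m+1) j hA
      have hAnil : A ++ ([] : List (ℕ × ℕ)) = A := by simp
      rw [hAnil] at hch ih1 ih2 hcongr
      constructor
      · show evacAux k (m + 1) (insL k (A ++ [((m+1), j)])) = _
        rw [hins]
        show placeAt 0 j false (m+1) (evacAux k m (insL k A)) = _
        rw [hch, hins]
        rw [show Tab.shape (Col.single j (m+1) :: insL k A) =
            Letter.one j :: Tab.shape (insL k A) from rfl, updateTab_one]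
        rw [ih1]
        rfl
      · rw [hch, hins]
        rw [show Tab.shape (Col.single j (m+1) :: insL k A) =
            Letter.one j :: Tab.shape (insL k A) from rfl, updateTab_one]
        exact congrArg (fun w => Letter.one j :: w) ih2
    · -- S0 = S' ++ [q]
      rw [List.concat_eq_append] at hS
      subst hS
      have hmid : insL k (A ++ ((m+1), j) :: (S' ++ [q])) =
          Col.double q.2 (k + 1 - q.2) q.1 (m+1) :: insL k (A ++ S') :=
        insL_max_mid S' q A (m+1) j hlt
      have hconcat : insL k (A ++ (S' ++ [q])) =
          insertVal k q.1 q.2 (insL k (A ++ S')) := by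
        rw [show A ++ (S' ++ [q]) = (A ++ S') ++ [q] by simp, insL_concat]
      obtain ⟨spec1, spec2⟩ := evacLoop_spec q.2 q.1 (insL k (A ++ S')) (invT_insL _)
      have hshapeT : Tab.shape
          (chainTab k (fun r => Tab.shape (insL k ((A ++ (S' ++ [q])).filter (fun p => p.1 ≤ r)))) m) =
          Tab.shape (insertVal k q.1 q.2 (insL k (A ++ S'))) := by
        rw [ih2, hconcat]
      obtain ⟨hupd, hshp⟩ := spec2 (m + 1) _ hshapeT
      constructor
      · show evacAux k (m + 1) (insL k (A ++ ((m+1), j) :: (S' ++ [q]))) = _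
        rw [hmid]
        show placeAt (evacLoop q.2 (k + 1 - q.2) q.1 (insL k (A ++ S'))).1.1
            (evacLoop q.2 (k + 1 - q.2) q.1 (insL k (A ++ S'))).1.2.1
            (evacLoop q.2 (k + 1 - q.2) q.1 (insL k (A ++ S'))).1.2.2 (m + 1)
            (evacAux k m (evacLoop q.2 (k + 1 - q.2) q.1 (insL k (A ++ S'))).2) = _
        rw [spec1, ← hconcat, ih1, hch, hconcat, hmid]
        rw [show Tab.shape (Col.double q.2 (k + 1 - q.2) q.1 (m+1) :: insL k (A ++ S')) =
            Letter.two :: Tab.shape (insL k (A ++ S')) from rfl]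
        exact hupd.symm
      · rw [hch, hconcat, hmid]
        rw [show Tab.shape (Col.double q.2 (k + 1 - q.2) q.1 (m+1) :: insL k (A ++ S')) =
            Letter.two :: Tab.shape (insL k (A ++ S')) from rfl]
        rw [hupd, hshp]

end KRF
namespace KRF
variable {k : ℕ}

def piList (k n : ℕ) (π : ColoredPerm n k) : List (ℕ × ℕ) :=
  (List.finRange n).map (fun m => ((π.perm m : ℕ) + 1, π.color m))

lemma length_piList (n : ℕ) (π : ColoredPerm n k) : (piList k n π).length = n := by
  simp [piList]

lemma getElem_piList (n : ℕ) (π : ColoredPerm n k) (c : ℕ) (hc : c < n) :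
    (piList k n π)[c]'(by rw [length_piList]; exact hc) =
      ((π.perm ⟨c, hc⟩ : ℕ) + 1, π.color ⟨c, hc⟩) := by
  simp only [piList, List.getElem_map, List.getElem_finRange]
  rfl

lemma mem_take_piList (n : ℕ) (π : ColoredPerm n k) (c : ℕ) (p : ℕ × ℕ)
    (hp : p ∈ (piList k n π).take c) :
    ∃ i, ∃ h : i < n, i < c ∧ p = ((π.perm ⟨i, h⟩ : ℕ) + 1, π.color ⟨i, h⟩) := by
  rw [List.mem_take_iff_getElem] at hp
  obtain ⟨i, hi, hpe⟩ := hp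
  have hi2 : i < n := by
    have := hi
    rw [length_piList] at this
    omega
  exact ⟨i, hi2, by omega, by rw [← hpe, getElem_piList n π i hi2]⟩

lemma mem_piList_val (n : ℕ) (π : ColoredPerm n k) (p : ℕ × ℕ) (hp : p ∈ piList k n π) :
    1 ≤ p.1 := by
  simp only [piList, List.mem_map] at hp
  obtain ⟨m, _, rfl⟩ := hp
  omega

lemma values_piList (n : ℕ) (π : ColoredPerm n k) :
    ((piList k n π).map Prod.fst).Perm (List.range' 1 n) := by
  have hb : ((List.finRange n).map π.perm).Perm (List.finRange n) := by
    apply List.perm_of_nodup_nodup_toFinset_eq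
    · exact (List.nodup_finRange n).map π.perm.injective
    · exact List.nodup_finRange n
    · ext x
      simp only [List.mem_toFinset, List.mem_map, List.mem_finRange, true_and, iff_true]
      exact ⟨π.perm.symm x, π.perm.apply_symm_apply x⟩
  have h1 : (piList k n π).map Prod.fst =
      ((List.finRange n).map π.perm).map (fun x : Fin n => (x : ℕ) + 1) := by
    simp [piList, List.map_map]
  rw [h1]
  refine (hb.map _).trans ?_
  have h2 : (List.finRange n).map (fun x : Fin n => (x : ℕ) + 1) =
      (List.range n).map (fun x => x + 1) := by
    rw [← List.map_coe_finRange_eq_range, List.map_map]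
    rfl
  have h3 : (List.range n).map (fun x => x + 1) = List.range' 1 n := by
    rw [List.range'_eq_map_range]
    exact List.map_congr_left (fun x _ => by omega)
  rw [h2, h3]

lemma nodup_values_take (n : ℕ) (π : ColoredPerm n k) (c : ℕ) :
    (((piList k n π).take c).map Prod.fst).Nodup := by
  have h1 : ((piList k n π).map Prod.fst).Nodup :=
    (values_piList n π).nodup_iff.mpr (by simp [List.nodup_range'])
  rw [List.map_take]
  exact h1.sublist (List.take_sublist c _)

end KRF
namespace KRF
variable {k : ℕ}

lemma growthRule_XX (ν μ₂ : Word k) : growthRule k ν ν μ₂ none = μ₂ := by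
  by_cases h : μ₂ = ν <;> simp [growthRule, h]

lemma growthRule_right (ν μ₁ : Word k) : growthRule k ν μ₁ ν none = μ₁ := by
  by_cases h : μ₁ = ν <;> simp [growthRule, h]

lemma growthRule_X (ν : Word k) (j : ℕ) :
    growthRule k ν ν ν (some j) = Letter.one j :: ν := by
  simp [growthRule]

lemma growthRule_two (ν μ₁ μ₂ : Word k) (h1 : μ₁ ≠ ν) (h2 : μ₂ ≠ ν) :
    growthRule k ν μ₁ μ₂ none = Letter.two :: ν := by
  simp [growthRule, h1, h2]

lemma shape_ne_of_length_ne (M M' : List (ℕ × ℕ)) (h : M.length ≠ M'.length) :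
    Tab.shape (insL k M) ≠ Tab.shape (insL k M') := by
  intro he
  apply h
  rw [← ribbonCount_insL (k := k) M, ← ribbonCount_insL (k := k) M',
    ← rank_shape, ← rank_shape, he]

lemma filter_vals_le (M : List (ℕ × ℕ)) (r : ℕ) :
    ∀ v ∈ (M.filter (fun p => p.1 ≤ r)).map Prod.fst, v ≤ r := by
  intro v hv
  obtain ⟨p, hp, rfl⟩ := List.mem_map.mp hv
  have := List.of_mem_filter hp
  simpa using this

lemma filter_congr_of_ne (M : List (ℕ × ℕ)) (r : ℕ) (h : ∀ p ∈ M, p.1 ≠ r + 1) :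
    M.filter (fun p => p.1 ≤ r + 1) = M.filter (fun p => p.1 ≤ r) := by
  refine List.filter_congr ?_
  intro p hp
  have := h p hp
  simp only [decide_eq_decide]
  omega

lemma growth_eq (n : ℕ) (π : ColoredPerm n k) :
    ∀ s c r, c + r = s → c ≤ n → r ≤ n → growth k n π c r =
      Tab.shape (insL k (((piList k n π).take c).filter (fun p => p.1 ≤ r))) := by
  intro s
  induction s using Nat.strong_induction_on with
  | _ s ihs =>
    intro c r hs hc hr
    match c, r with
    | 0, r =>
      rw [growth]
      simp [insL, Tab.shape]
    | (c+1), 0 =>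
      rw [growth]
      have : ((piList k n π).take (c+1)).filter (fun p => p.1 ≤ 0) = [] := by
        rw [List.filter_eq_nil_iff]
        intro p hp
        have h1 := mem_piList_val n π p ((List.take_sublist _ _).mem hp)
        simpa using by omega
      rw [this]
      rfl
    | (c+1), (r+1) =>
      have hcn : c < n := by omega
      have hrn : r < n := by omega
      have hc' : c ≤ n := by omega
      have hr' : r ≤ n := by omega
      set xc : ℕ := (π.perm ⟨c, hcn⟩ : ℕ) with hxc
      set jc : ℕ := π.color ⟨c, hcn⟩ with hjc
      have htake : (piList k n π).take (c+1) =
          (piList k n π).take c ++ [(xc + 1, jc)] := by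
        have hlen : c < (piList k n π).length := by rw [length_piList]; omega
        rw [List.take_succ]
        rw [List.getElem?_eq_getElem hlen]
        rw [show (piList k n π)[c]'hlen = (xc + 1, jc) from getElem_piList n π c hcn]
        rfl
      have Hcr := ihs (c + r) (by omega) c r rfl hc' hr'
      have Hcr1 := ihs (c + (r+1)) (by omega) c (r+1) rfl hc' hr
      have Hc1r := ihs ((c+1) + r) (by omega) (c+1) r rfl hc hr'
      rw [growth, Hcr, Hcr1, Hc1r]
      -- append simplifications
      have happend : ∀ r' : ℕ, xc + 1 ≤ r' →
          ((piList k n π).take (c+1)).filter (fun p => p.1 ≤ r') =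
            ((piList k n π).take c).filter (fun p => p.1 ≤ r') ++ [(xc + 1, jc)] := by
        intro r' h'
        rw [htake, List.filter_append]
        simp [h']
      have hdrop : ∀ r' : ℕ, ¬ (xc + 1 ≤ r') →
          ((piList k n π).take (c+1)).filter (fun p => p.1 ≤ r') =
            ((piList k n π).take c).filter (fun p => p.1 ≤ r') := by
        intro r' h'
        rw [htake, List.filter_append]
        simp [h']
      rcases Nat.lt_trichotomy xc r with hx | hx | hx
      · -- xc < r : the X is strictly below row r+1 and in column c+1
        have hsq : squareX k n π c r = none := by
          simp only [squareX, dif_pos (⟨hcn, hrn⟩ : c < n ∧ r < n)]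
          rw [if_neg (by omega)]
        rw [hsq, happend r (by omega), happend (r+1) (by omega)]
        by_cases hmem : (r + 1) ∈ ((piList k n π).take c).map Prod.fst
        · -- the value r+1 occurs among the first c entries
          obtain ⟨q, hq, hq1⟩ := List.mem_map.mp hmem
          obtain ⟨A, S, hdec⟩ := List.append_of_mem hq
          obtain ⟨q1, q2⟩ := q
          have hq1' : q1 = r + 1 := hq1
          subst hq1'
          have hnd : ((A ++ (r+1, q2) :: S).map Prod.fst).Nodup := by
            rw [← hdec]; exact nodup_values_take n π c
          have hnotin : (r+1) ∉ (A.map Prod.fst) ∧ (r+1) ∉ (S.map Prod.fst) := by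
            rw [List.map_append, List.map_cons] at hnd
            have h3 := List.nodup_middle.mp hnd
            rw [List.nodup_cons] at h3
            have h2 := h3.1
            simp only [List.mem_append, not_or] at h2
            exact h2
          have hAf : A.filter (fun p => p.1 ≤ r + 1) = A.filter (fun p => p.1 ≤ r) :=
            filter_congr_of_ne A r (fun p hp hpe =>
              hnotin.1 (by rw [← hpe]; exact List.mem_map.mpr ⟨p, hp, rfl⟩))
          have hSf : S.filter (fun p => p.1 ≤ r + 1) = S.filter (fun p => p.1 ≤ r) :=
            filter_congr_of_ne S r (fun p hp hpe =>
              hnotin.2 (by rw [← hpe]; exact List.mem_map.mpr ⟨p, hp, rfl⟩))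
          have hFr : ((piList k n π).take c).filter (fun p => p.1 ≤ r) =
              A.filter (fun p => p.1 ≤ r) ++ S.filter (fun p => p.1 ≤ r) := by
            rw [hdec, filter_mid A S (r+1) q2 r (by omega)]
            rw [List.filter_append]
          have hFr1 : ((piList k n π).take c).filter (fun p => p.1 ≤ r + 1) =
              A.filter (fun p => p.1 ≤ r) ++ (r+1, q2) :: S.filter (fun p => p.1 ≤ r) := by
            rw [hdec, List.filter_append, List.filter_cons]
            simp only [hAf, hSf]
            norm_num
          have hvals : ∀ v ∈ ((A.filter (fun p => p.1 ≤ r) ++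
              (S.filter (fun p => p.1 ≤ r) ++ [(xc + 1, jc)])).map Prod.fst), v < r + 1 := by
            intro v hv
            simp only [List.map_append, List.mem_append] at hv
            rcases hv with h1 | h2 | h3
            · have := filter_vals_le A r v h1; omega
            · have := filter_vals_le S r v h2; omega
            · simp at h3; omega
          have hmax := insL_max_mid (k := k) (S.filter (fun p => p.1 ≤ r)) (xc + 1, jc)
            (A.filter (fun p => p.1 ≤ r)) (r+1) q2 hvals
          rw [hFr, hFr1]
          rw [show A.filter (fun p => p.1 ≤ r) ++ (r+1, q2) :: S.filter (fun p => p.1 ≤ r)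
              ++ [(xc + 1, jc)] =
              A.filter (fun p => p.1 ≤ r) ++ (r+1, q2) ::
                (S.filter (fun p => p.1 ≤ r) ++ [(xc + 1, jc)]) by simp]
          rw [hmax]
          rw [growthRule_two]
          · rfl
          · apply shape_ne_of_length_ne
            simp
          · apply shape_ne_of_length_ne
            simp
        · -- the value r+1 does not occur among the first c entries
          have hne : ((piList k n π).take c).filter (fun p => p.1 ≤ r + 1) =
              ((piList k n π).take c).filter (fun p => p.1 ≤ r) :=
            filter_congr_of_ne _ r (fun p hp hpe =>
              hmem (by rw [← hpe]; exact List.mem_map.mpr ⟨p, hp, rfl⟩))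
          rw [hne, growthRule_XX]
      · -- xc = r : the square contains the X
        have hsq : squareX k n π c r = some jc := by
          simp only [squareX, dif_pos (⟨hcn, hrn⟩ : c < n ∧ r < n)]
          rw [if_pos hx]
        have hnotmem : ∀ p ∈ (piList k n π).take c, p.1 ≠ r + 1 := by
          intro p hp hpe
          obtain ⟨i, hi, hic, rfl⟩ := mem_take_piList n π c p hp
          have : (π.perm ⟨i, hi⟩ : ℕ) = xc := by simpa [hx] using hpe
          have : (⟨i, hi⟩ : Fin n) = ⟨c, hcn⟩ := π.perm.injective (Fin.val_injective (by
            rw [this]))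
          have : i = c := by simpa using this
          omega
        have hne : ((piList k n π).take c).filter (fun p => p.1 ≤ r + 1) =
            ((piList k n π).take c).filter (fun p => p.1 ≤ r) :=
          filter_congr_of_ne _ r hnotmem
        have hdr : ((piList k n π).take (c+1)).filter (fun p => p.1 ≤ r) =
            ((piList k n π).take c).filter (fun p => p.1 ≤ r) :=
          hdrop r (by omega)
        have hap : ((piList k n π).take (c+1)).filter (fun p => p.1 ≤ r + 1) =
            ((piList k n π).take c).filter (fun p => p.1 ≤ r) ++ [(xc + 1, jc)] := by
          rw [← hne]; exact happend (r+1) (by omega)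
        rw [hsq, hne, hdr, hap, insL_concat]
        rw [insertVal_of_big (xc + 1) jc _ (entries_lt _ _ (fun v hv => by
          have := filter_vals_le ((piList k n π).take c) r v hv
          omega))]
        rw [growthRule_X]
        rfl
      · -- xc > r : the X is above; columns c+1 rows ≤ r+1 unaffected
        have hsq : squareX k n π c r = none := by
          simp only [squareX, dif_pos (⟨hcn, hrn⟩ : c < n ∧ r < n)]
          rw [if_neg (by omega)]
        rw [hsq, hdrop r (by omega), hdrop (r+1) (by omega), growthRule_right]

end KRF
namespace KRF

theorem evac_PTab_eq_PhatTab' (k n : ℕ) (π : ColoredPerm n k) :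
    evac k (PTab k n π) = PhatTab k n π := by
  have h1 : PTab k n π = (List.finRange n).foldl
      (fun T m => insertVal k ((π.perm m : ℕ) + 1) (π.color m) T) [] := by
    unfold PTab PPartial
    rw [List.take_of_length_le (by simp)]
  have h2 : insL k (piList k n π) = (List.finRange n).foldl
      (fun T m => insertVal k ((π.perm m : ℕ) + 1) (π.color m) T) [] := by
    unfold insL piList
    rw [List.foldl_map]
  have hPT : PTab k n π = insL k (piList k n π) := by rw [h1, h2]
  have hrc : Tab.ribbonCount (PTab k n π) = n := by
    rw [hPT, ribbonCount_insL, length_piList]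
  obtain ⟨hM1, _⟩ := evacAux_insL (k := k) n (piList k n π) (values_piList n π)
  show evacAux k (Tab.ribbonCount (PTab k n π)) (PTab k n π) = chainTab k (PhatChain k n π) n
  rw [hrc, hPT, hM1]
  refine chainTab_congr _ _ n ?_
  intro i hi
  show Tab.shape (insL k ((piList k n π).filter (fun p => p.1 ≤ i))) = growth k n π n i
  rw [growth_eq n π (n + i) n i rfl le_rfl hi]
  rw [List.take_of_length_le (by rw [length_piList])]

end KRF
namespace KRF

/-- For every `k`-colored permutation `π` of length `n`, the evacuation
of the insertion tableau equals the path tableau produced by Fomin's growth rules along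
the right edge of the square diagram:  `ev(P(π)) = P̂(π)`. -/
theorem evac_PTab_eq_PhatTab (k n : ℕ) (hk : 1 ≤ k) (π : ColoredPerm n k) :
    evac k (PTab k n π) = PhatTab k n π := by
  exact evac_PTab_eq_PhatTab' k n π

end KRF
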